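/- Let (S, T) be a neutral dual pair in a Krein space (H,J), and let P ∈ L(H) be the projection onto S along T^{[⊥]}. Then the operator T₀ = P^# J restricted to S is a bounded bijection from S onto T, where P^# is the projection onto T along S^{[⊥]}. -/

import Mathlib

open ContinuousLinearMap

variable {H : Type*} [NormedAddCommGroup H] [InnerProductSpace ℂ H] [CompleteSpace H]

/-- The `J`-adjoint `T^# = J T* J`. -/
noncomputable def sharp (J T : H →L[ℂ] H) : H →L[ℂ] H :=
  J ∘L (ContinuousLinearMap.adjoint T) ∘L J

/-- The `J`-orthogonal companion `S^{[⊥]} = {f : [g,f] = 0 ∀ g ∈ S}` where `[g,f] = ⟪J g, f⟫`. -/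
def jperp (J : H →L[ℂ] H) (S : Submodule ℂ H) : Submodule ℂ H where
  carrier := {f | ∀ g ∈ S, (inner ℂ (J g) f : ℂ) = 0}
  add_mem' := by
    intro a b ha hb g hg
    rw [inner_add_right, ha g hg, hb g hg, add_zero]
  zero_mem' := by
    intro g hg
    simp
  smul_mem' := by
    intro c a ha g hg
    rw [inner_smul_right, ha g hg, mul_zero]

/-- For a neutral dual pair `(S,T)`, if `P` is the projection onto `S` along `T^{[⊥]}`, then
`P^# J` restricted to `S` is a (bounded) bijection from `S` onto `T`. -/
theorem stmt6 (J : H →L[ℂ] H)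
    (hJsa : ContinuousLinearMap.adjoint J = J) (hJ2 : J ∘L J = 1)
    (S T : Submodule ℂ H)
    (hSc : IsClosed (S : Set H)) (hTc : IsClosed (T : Set H))
    (hSneu : ∀ f ∈ S, (inner ℂ (J f) f : ℂ) = 0)
    (hTneu : ∀ f ∈ T, (inner ℂ (J f) f : ℂ) = 0)
    (hsum : ∀ x : H, ∃ a ∈ S, ∃ b ∈ jperp J T, x = a + b)
    (hdis : S ⊓ jperp J T = ⊥)
    (P : H →L[ℂ] H) (hP : P ∘L P = P)
    (hran : LinearMap.range (P : H →ₗ[ℂ] H) = S) (hker : LinearMap.ker (P : H →ₗ[ℂ] H) = jperp J T) :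
    Set.BijOn (fun f => sharp J P (J f)) (S : Set H) (T : Set H) := by

  classical
  set Q := ContinuousLinearMap.adjoint P with hQdef
  have hJJ : ∀ x : H, J (J x) = x := by
    intro x
    have := congrArg (fun (A : H →L[ℂ] H) => A x) hJ2
    simpa using this
  have hkey : ∀ f : H, sharp J P (J f) = J (Q f) := by
    intro f
    simp [sharp, hJJ, hQdef]
  have hMclosed : IsClosed ((Submodule.map (J : H →ₗ[ℂ] H) T : Submodule ℂ H) : Set H) := by
    have h : ((Submodule.map (J : H →ₗ[ℂ] H) T : Submodule ℂ H) : Set H) = J ⁻¹' (T : Set H) := by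
      ext u
      constructor
      · rintro ⟨t, ht, rfl⟩
        simpa [hJJ] using ht
      · intro hu
        exact ⟨J u, hu, hJJ u⟩
    rw [h]
    exact hTc.preimage J.continuous
  have hjperp_eq : jperp J T = (Submodule.map (J : H →ₗ[ℂ] H) T)ᗮ := by
    ext f
    constructor
    · intro hf
      rw [Submodule.mem_orthogonal]
      rintro u ⟨t, ht, rfl⟩
      exact hf t ht
    · intro hf g hg
      exact (Submodule.mem_orthogonal _ _).mp hf (J g) ⟨g, hg, rfl⟩
  haveI : CompleteSpace (Submodule.map (J : H →ₗ[ℂ] H) T : Submodule ℂ H) := hMclosed.completeSpace_coe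
  have hMoo : (Submodule.map (J : H →ₗ[ℂ] H) T)ᗮᗮ = Submodule.map (J : H →ₗ[ℂ] H) T :=
    Submodule.orthogonal_orthogonal _
  have hranQ : ∀ x : H, J (Q x) ∈ T := by
    intro x
    have hmem : Q x ∈ (Submodule.map (J : H →ₗ[ℂ] H) T : Submodule ℂ H) := by
      rw [← hMoo, Submodule.mem_orthogonal]
      intro u hu
      have huk : u ∈ LinearMap.ker (P : H →ₗ[ℂ] H) := by rw [hker, hjperp_eq]; exact hu
      have h2 : (inner ℂ u (Q x) : ℂ) = inner ℂ (P u) x :=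
        ContinuousLinearMap.adjoint_inner_right P u x
      rw [h2, show P u = 0 from LinearMap.mem_ker.mp huk, inner_zero_left]
    rcases hmem with ⟨t, ht, h⟩
    have h3 : J (Q x) = t := by rw [← h]; exact hJJ t
    rwa [h3]
  have hmapsTo : Set.MapsTo (fun f => sharp J P (J f)) (S : Set H) (T : Set H) := by
    intro f _
    simp only [hkey]
    exact hranQ f
  have hinj0 : ∀ d ∈ S, Q d = 0 → d = 0 := by
    intro d hd hQd
    rw [← hran] at hd
    rcases hd with ⟨y, rfl⟩
    have h : (inner ℂ (P y) (P y) : ℂ) = inner ℂ y (Q (P y)) :=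
      (ContinuousLinearMap.adjoint_inner_right P y (P y)).symm
    rw [show Q (P y) = 0 from hQd, inner_zero_right] at h
    exact inner_self_eq_zero.mp h
  have hinj : Set.InjOn (fun f => sharp J P (J f)) (S : Set H) := by
    intro a ha b hb hab
    simp only [hkey] at hab
    have hQab : Q a = Q b := by
      have h := congrArg J hab
      rwa [hJJ, hJJ] at h
    have hd : a - b ∈ S := S.sub_mem ha hb
    have hz : Q (a - b) = 0 := by rw [map_sub, hQab, sub_self]
    exact sub_eq_zero.mp (hinj0 (a - b) hd hz)
  have hsurj : Set.SurjOn (fun f => sharp J P (J f)) (S : Set H) (T : Set H) := by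
    intro t ht
    -- Q (J t) = J t
    have hfix : Q (J t) = J t := by
      have hz : ∀ y : H, (inner ℂ y (Q (J t) - J t) : ℂ) = 0 := by
        intro y
        rw [inner_sub_right]
        have h1 : (inner ℂ y (Q (J t)) : ℂ) = inner ℂ (P y) (J t) :=
          ContinuousLinearMap.adjoint_inner_right P y (J t)
        have hmem : P y - y ∈ LinearMap.ker (P : H →ₗ[ℂ] H) := by
          rw [LinearMap.mem_ker, map_sub]
          have := congrArg (fun (A : H →L[ℂ] H) => A y) hP
          simp only [ContinuousLinearMap.comp_apply] at this
          exact sub_eq_zero.mpr this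
        rw [hker] at hmem
        have h2 : (inner ℂ (J t) (P y - y) : ℂ) = 0 := hmem t ht
        have h3 : (inner ℂ (P y - y) (J t) : ℂ) = 0 := by
          rw [← inner_conj_symm, h2, map_zero]
        rw [inner_sub_left] at h3
        rw [h1]
        linear_combination h3
      have h := hz (Q (J t) - J t)
      exact sub_eq_zero.mp (inner_self_eq_zero.mp h)
    haveI : CompleteSpace S := hSc.completeSpace_coe
    obtain ⟨s, hs, u, hu, hsu⟩ := Submodule.exists_add_mem_mem_orthogonal (K := S) (J t)
    have hQu : Q u = 0 := by
      have h : (inner ℂ (Q u) (Q u) : ℂ) = inner ℂ u (P (Q u)) :=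
        ContinuousLinearMap.adjoint_inner_left P (Q u) u
      have hPQ : P (Q u) ∈ S := by rw [← hran]; exact ⟨Q u, rfl⟩
      rw [(Submodule.mem_orthogonal' S u).mp hu _ hPQ] at h
      exact inner_self_eq_zero.mp h
    have hQs : Q s = J t := by
      have : Q (J t) = Q s + Q u := by rw [hsu, map_add]
      rw [hfix, hQu, add_zero] at this
      exact this.symm
    refine ⟨s, hs, ?_⟩
    simp only [hkey, hQs, hJJ]
  exact ⟨hmapsTo, hinj, hsurj⟩
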